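/- Let p,q > 0 with p+q < 1, ζ = (1-4pq)^{-1/2}, ξ₁ > 1 > ξ₂ > 0 the roots of qξ²-ξ+p=0, and r > 0. Define f_{n,0} = ζξ₁ⁿ (n≤0), ζξ₂ⁿ (n≥0), and f_{n,1} = (-n+ζ)rζ²ξ₁ⁿ for n ≤ 0, f_{n,1} = (n+ζ)rζ²ξ₂ⁿ for n ≥ 0. Then for all n ∈ ℤ: f_{n,1} = p·f_{n-1,1} + q·f_{n+1,1} + r·f_{n,0}. -/
import Mathlib


theorem layer1_recurrence
    (p q r : ℝ) (hp : 0 < p) (hq : 0 < q) (hpq : p + q < 1) (hr : 0 < r)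
    (ζ ξ₁ ξ₂ : ℝ)
    (hζ : ζ = (1 - 4 * p * q) ^ (-(1:ℝ)/2))
    (hξ₁ : q * ξ₁ ^ 2 - ξ₁ + p = 0) (hξ₂ : q * ξ₂ ^ 2 - ξ₂ + p = 0)
    (h1 : ξ₁ > 1) (h2 : 1 > ξ₂) (h3 : ξ₂ > 0)
    (f₀ f₁ : ℤ → ℝ)
    (hf₀ : ∀ n : ℤ, f₀ n = if n ≤ 0 then ζ * ξ₁ ^ n else ζ * ξ₂ ^ n)
    (hf₁ : ∀ n : ℤ, f₁ n = if n ≤ 0 then (-n + ζ) * r * ζ ^ 2 * ξ₁ ^ n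
                           else (n + ζ) * r * ζ ^ 2 * ξ₂ ^ n) :
    ∀ n : ℤ, f₁ n = p * f₁ (n - 1) + q * f₁ (n + 1) + r * f₀ n := by
  have h4pq : 4 * p * q < 1 := by nlinarith [sq_nonneg (p - q)]
  have hpos : (0:ℝ) < 1 - 4 * p * q := by linarith
  set s : ℝ := Real.sqrt (1 - 4 * p * q) with hsdef
  have hs0 : 0 < s := Real.sqrt_pos.mpr hpos
  have hs2 : s ^ 2 = 1 - 4 * p * q := Real.sq_sqrt hpos.le
  have hζ' : ζ = s⁻¹ := by
    rw [hζ, show (-(1:ℝ)/2) = -(1/2) by norm_num, Real.rpow_neg hpos.le,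
      ← Real.sqrt_eq_rpow]
  have hζs : ζ * s = 1 := by rw [hζ']; exact inv_mul_cancel₀ hs0.ne'
  have hx1 : ξ₁ ≠ 0 := by positivity
  have hx2 : ξ₂ ≠ 0 := h3.ne'
  -- identify the roots
  have h2q₂ : 2 * q * ξ₂ = 1 - s := by
    have hsq : (2 * q * ξ₂ - 1 - s) * (2 * q * ξ₂ - 1 + s) = 0 := by
      linear_combination 4 * q * hξ₂ - hs2
    have key : (1 - ξ₂) * (1 - q * (1 + ξ₂)) = 1 - p - q := by linear_combination hξ₂
    rcases mul_eq_zero.mp hsq with h | h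
    · exfalso; nlinarith [key, mul_pos hq (sub_pos.mpr h2), hs0]
    · linarith
  have h2q₁ : 2 * q * ξ₁ = 1 + s := by
    have hsq : (2 * q * ξ₁ - 1 - s) * (2 * q * ξ₁ - 1 + s) = 0 := by
      linear_combination 4 * q * hξ₁ - hs2
    have key : (ξ₁ - 1) * (q * (1 + ξ₁) - 1) = 1 - p - q := by linear_combination hξ₁
    rcases mul_eq_zero.mp hsq with h | h
    · linarith
    · exfalso; nlinarith [key, mul_pos hq (sub_pos.mpr h1), hs0]
  have hB1 : ξ₁ * (1 - s) = 2 * p := by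
    apply mul_left_cancel₀ (show (2 * q : ℝ) ≠ 0 by positivity)
    linear_combination (1 - s) * h2q₁ - hs2
  have hB2 : ξ₂ * (1 + s) = 2 * p := by
    apply mul_left_cancel₀ (show (2 * q : ℝ) ≠ 0 by positivity)
    linear_combination (1 + s) * h2q₂ - hs2
  have hdiff : q * ξ₁ - q * ξ₂ = s := by linarith
  have hp1 : p * ξ₁⁻¹ = 1 - q * ξ₁ := by
    field_simp
    linear_combination hξ₁
  intro n
  rcases lt_trichotomy n 0 with hn | hn | hn
  · -- n < 0
    rw [hf₁ n, hf₁ (n - 1), hf₁ (n + 1), hf₀ n, if_pos hn.le,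
      if_pos (by omega : n - 1 ≤ 0), if_pos (by omega : n + 1 ≤ 0), if_pos hn.le]
    have e0 : ξ₁ ^ n = ξ₁ ^ (n - 1) * ξ₁ := by
      rw [← zpow_add_one₀ hx1, sub_add_cancel]
    have e2 : ξ₁ ^ (n + 1) = ξ₁ ^ (n - 1) * ξ₁ * ξ₁ := by
      rw [show n + 1 = n - 1 + 1 + 1 by ring, zpow_add_one₀ hx1, zpow_add_one₀ hx1]
    rw [e0, e2]
    push_cast
    linear_combination (-(r * ζ ^ 2 * (ξ₁ ^ (n - 1)) * (-(n:ℝ) - 1 + ζ))) * hξ₁ +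
      (r * ζ ^ 2 * ξ₁ ^ (n - 1)) * hB1 + (r * ζ * (ξ₁ ^ (n - 1)) * ξ₁) * hζs
  · -- n = 0
    subst hn
    have g0 : f₁ 0 = ζ * r * ζ ^ 2 := by rw [hf₁]; norm_num
    have gm : f₁ (0 - 1) = (1 + ζ) * r * ζ ^ 2 * ξ₁⁻¹ := by
      rw [hf₁]; norm_num [zpow_neg]
    have g1 : f₁ (0 + 1) = (1 + ζ) * r * ζ ^ 2 * ξ₂ := by rw [hf₁]; norm_num
    have g00 : f₀ 0 = ζ := by rw [hf₀]; norm_num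
    rw [g0, gm, g1, g00]
    linear_combination (-(1 + ζ) * r * ζ ^ 2) * hp1 + ((1 + ζ) * r * ζ ^ 2) * hdiff +
      (r * ζ * (ζ + 1)) * hζs
  · -- n > 0
    have hfm : f₁ (n - 1) = ((n:ℝ) - 1 + ζ) * r * ζ ^ 2 * ξ₂ ^ (n - 1) := by
      by_cases hn1 : n = 1
      · subst hn1; rw [hf₁]; norm_num
      · rw [hf₁, if_neg (by omega : ¬ n - 1 ≤ 0)]; push_cast; ring
    rw [hf₁ n, hf₁ (n + 1), hf₀ n, hfm, if_neg (by omega : ¬ n ≤ 0),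
      if_neg (by omega : ¬ n + 1 ≤ 0), if_neg (by omega : ¬ n ≤ 0)]
    have e0 : ξ₂ ^ n = ξ₂ ^ (n - 1) * ξ₂ := by
      rw [← zpow_add_one₀ hx2, sub_add_cancel]
    have e2 : ξ₂ ^ (n + 1) = ξ₂ ^ (n - 1) * ξ₂ * ξ₂ := by
      rw [show n + 1 = n - 1 + 1 + 1 by ring, zpow_add_one₀ hx2, zpow_add_one₀ hx2]
    rw [e0, e2]
    push_cast
    linear_combination (-(r * ζ ^ 2 * (ξ₂ ^ (n - 1)) * ((n:ℝ) + 1 + ζ))) * hξ₂ +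
      (-(r * ζ ^ 2 * ξ₂ ^ (n - 1))) * hB2 + (r * ζ * ξ₂ * (ξ₂ ^ (n - 1))) * hζs
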